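/- Let (Ω, 𝒜, μ) be a σ-finite complete measure space and F : Ω → 𝒦(ℝ^d) a measurable map taking values in nonempty convex symmetric closed sets. Then the polar map F°, defined by F°(x) = F(x)°, is also measurable. -/

import Mathlib

open MeasureTheory
open scoped RealInnerProductSpace

/-- Measurability of a closed-set valued map: preimages of open sets (in the hitting
sense) are measurable. -/
def SetValuedMeasurable {Ω : Type*} [MeasurableSpace Ω] {d : ℕ}
    (F : Ω → Set (EuclideanSpace ℝ (Fin d))) : Prop :=
  ∀ U : Set (EuclideanSpace ℝ (Fin d)), IsOpen U → MeasurableSet {x | (F x ∩ U).Nonempty}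

/-- The polar of a set in ℝ^d with respect to the Euclidean inner product. -/
def polarSet {d : ℕ} (K : Set (EuclideanSpace ℝ (Fin d))) : Set (EuclideanSpace ℝ (Fin d)) :=
  {v | ∀ w ∈ K, |⟪v, w⟫| ≤ 1}

/-- Perturbation estimate for inner products. -/
lemma polar_aux_perturb {d : ℕ} (v a b : EuclideanSpace ℝ (Fin d)) :
    |⟪v, a⟫| - |⟪v, b⟫| ≤ ‖v‖ * ‖a - b‖ := by
  have h1 := abs_sub_abs_le_abs_sub (⟪v, a⟫) (⟪v, b⟫)
  rw [← inner_sub_right] at h1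
  exact h1.trans (abs_real_inner_le_norm _ _)

/-- Norm bound for elements of a closed ball. -/
lemma polar_aux_norm_le {d : ℕ} {v q : EuclideanSpace ℝ (Fin d)} {r : ℝ}
    (hv : v ∈ Metric.closedBall q r) : ‖v‖ ≤ ‖q‖ + r := by
  have hd : dist v q ≤ r := Metric.mem_closedBall.1 hv
  have h1 : ‖v‖ - ‖q‖ ≤ ‖v - q‖ := norm_sub_norm_le v q
  rw [← dist_eq_norm] at h1
  linarith

/-- Core combinatorial characterization: the polar of `K` misses a closed ball iff there is
a finite list of rational data certifying this, where the certificate only refers to `K`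
through "K hits an open ball" conditions. -/
lemma polar_core {d : ℕ} (u : ℕ → EuclideanSpace ℝ (Fin d)) (hu : DenseRange u)
    (K : Set (EuclideanSpace ℝ (Fin d))) (q : EuclideanSpace ℝ (Fin d)) (r : ℝ) :
    polarSet K ∩ Metric.closedBall q r = ∅ ↔
      ∃ l : List (ℕ × ℚ),
        (∀ v ∈ Metric.closedBall q r, ∃ p ∈ l, 0 < p.2 ∧
            1 + (p.2 : ℝ) * (‖q‖ + r) < |⟪v, u p.1⟫|) ∧
        ∀ p ∈ l, (K ∩ Metric.ball (u p.1) ((p.2 : ℝ))).Nonempty := by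
  constructor
  · intro hemp
    rcases lt_or_ge r 0 with hr | hr
    · refine ⟨[], ?_, ?_⟩
      · intro v hv
        rw [Metric.closedBall_eq_empty.2 hr] at hv
        exact absurd hv (Set.notMem_empty v)
      · intro p hp; exact absurd hp (List.not_mem_nil (a := p))
    · have hR : (0:ℝ) ≤ ‖q‖ + r := add_nonneg (norm_nonneg q) hr
      obtain ⟨Rb, hRb⟩ := exists_rat_gt (‖q‖ + r)
      have hRb0 : (0:ℚ) < Rb + 1 := by
        have h : (0:ℝ) < (Rb:ℝ) := lt_of_le_of_lt hR hRb
        have h' : (0:ℚ) < Rb := by exact_mod_cast h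
        linarith
      -- the open cover of the closed ball
      set O : {w // w ∈ K} × ℕ → Set (EuclideanSpace ℝ (Fin d)) :=
        fun j => {v | 1 + 3 * ((1:ℝ) / ((j.2 : ℝ) + 1)) < |⟪v, (j.1 : EuclideanSpace ℝ (Fin d))⟫|}
        with hO
      have hopen : ∀ j, IsOpen (O j) := by
        intro j
        have hcont : Continuous fun v : EuclideanSpace ℝ (Fin d) =>
            |⟪v, (j.1 : EuclideanSpace ℝ (Fin d))⟫| :=
          (continuous_id.inner continuous_const).abs
        exact isOpen_lt continuous_const hcont
      have hcov : Metric.closedBall q r ⊆ ⋃ j, O j := by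
        intro v hv
        have hvnot : v ∉ polarSet K := by
          intro hvp
          exact (Set.eq_empty_iff_forall_notMem.1 hemp v) ⟨hvp, hv⟩
        simp only [polarSet, Set.mem_setOf_eq, not_forall, not_le] at hvnot
        obtain ⟨w, hwK, hw1⟩ := hvnot
        have hc : 0 < |⟪v, w⟫| - 1 := by linarith
        obtain ⟨m, hm⟩ := exists_nat_gt (3 / (|⟪v, w⟫| - 1))
        refine Set.mem_iUnion.2 ⟨(⟨w, hwK⟩, m), ?_⟩
        have hm0 : (0:ℝ) < (m:ℝ) + 1 := by positivity
        have hm1 : 3 / (|⟪v, w⟫| - 1) < (m:ℝ) + 1 := hm.trans (lt_add_one _)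
        have h3 : 3 < ((m:ℝ) + 1) * (|⟪v, w⟫| - 1) := (div_lt_iff₀ hc).1 hm1
        have h4 : 3 * ((1:ℝ) / ((m:ℝ) + 1)) < |⟪v, w⟫| - 1 := by
          rw [mul_one_div, div_lt_iff₀ hm0]
          linarith [h3, mul_comm ((m:ℝ) + 1) (|⟪v, w⟫| - 1)]
        show 1 + 3 * ((1:ℝ) / ((m:ℝ) + 1)) < |⟪v, w⟫|
        linarith
      obtain ⟨t, ht⟩ := (isCompact_closedBall q r).elim_finite_subcover O hopen hcov
      -- the rational radii
      set δ : {w // w ∈ K} × ℕ → ℚ := fun j => (1 / ((j.2 : ℚ) + 1)) / (Rb + 1) with hδdef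
      have hδ : ∀ j, 0 < δ j := by
        intro j
        apply div_pos _ hRb0
        positivity
      have hδR : ∀ j, (δ j : ℝ) * (‖q‖ + r) ≤ (1:ℝ) / ((j.2 : ℝ) + 1) := by
        intro j
        have hδr : (δ j : ℝ) = ((1:ℝ) / ((j.2 : ℝ) + 1)) / ((Rb:ℝ) + 1) := by
          rw [hδdef]; push_cast; ring
        have hδ0 : (0:ℝ) ≤ (δ j : ℝ) := by exact_mod_cast (hδ j).le
        have h1 : (δ j : ℝ) * (‖q‖ + r) ≤ (δ j : ℝ) * ((Rb:ℝ) + 1) := by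
          apply mul_le_mul_of_nonneg_left _ hδ0
          linarith
        have h2 : (δ j : ℝ) * ((Rb:ℝ) + 1) = (1:ℝ) / ((j.2 : ℝ) + 1) := by
          rw [hδr]
          have : ((Rb:ℝ) + 1) ≠ 0 := by
            have : (0:ℝ) < (Rb:ℝ) + 1 := by exact_mod_cast hRb0
            linarith
          field_simp
        linarith
      have hsel : ∀ j : {w // w ∈ K} × ℕ,
          ∃ i, dist ((j.1 : EuclideanSpace ℝ (Fin d))) (u i) < (δ j : ℝ) := by
        intro j
        exact hu.exists_dist_lt _ (by exact_mod_cast hδ j)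
      choose sel hsel using hsel
      refine ⟨(t.image fun j => (sel j, δ j)).toList, ?_, ?_⟩
      · intro v hv
        have hvt := ht hv
        simp only [Set.mem_iUnion] at hvt
        obtain ⟨j, hjt, hjv⟩ := hvt
        have hjv' : 1 + 3 * ((1:ℝ) / ((j.2 : ℝ) + 1)) < |⟪v, (j.1 : EuclideanSpace ℝ (Fin d))⟫| := hjv
        refine ⟨(sel j, δ j), Finset.mem_toList.2 (Finset.mem_image_of_mem _ hjt), hδ j, ?_⟩
        have hvn : ‖v‖ ≤ ‖q‖ + r := polar_aux_norm_le hv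
        have hper := polar_aux_perturb v (j.1 : EuclideanSpace ℝ (Fin d)) (u (sel j))
        have h4 : ‖(j.1 : EuclideanSpace ℝ (Fin d)) - u (sel j)‖ ≤ (δ j : ℝ) := by
          have := hsel j
          rw [dist_eq_norm] at this
          linarith
        have h5 : ‖v‖ * ‖(j.1 : EuclideanSpace ℝ (Fin d)) - u (sel j)‖ ≤ (δ j : ℝ) * (‖q‖ + r) := by
          rw [mul_comm ((δ j : ℝ)) (‖q‖ + r)]
          exact mul_le_mul hvn h4 (norm_nonneg _) hR
        have hδc := hδR j
        have hcpos : (0:ℝ) < 1 / ((j.2 : ℝ) + 1) := by positivity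
        show 1 + (δ j : ℝ) * (‖q‖ + r) < |⟪v, u (sel j)⟫|
        linarith
      · intro p hp
        rw [Finset.mem_toList, Finset.mem_image] at hp
        obtain ⟨j, hjt, rfl⟩ := hp
        refine ⟨(j.1 : EuclideanSpace ℝ (Fin d)), j.1.2, ?_⟩
        exact Metric.mem_ball.2 (hsel j)
  · rintro ⟨l, hGood, hHit⟩
    rw [Set.eq_empty_iff_forall_notMem]
    rintro v ⟨hvp, hvc⟩
    obtain ⟨p, hpl, hp0, hlt⟩ := hGood v hvc
    obtain ⟨w, hwK, hwb⟩ := hHit p hpl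
    have h1 : |⟪v, w⟫| ≤ 1 := hvp w hwK
    have hr0 : (0:ℝ) ≤ r := le_trans dist_nonneg (Metric.mem_closedBall.1 hvc)
    have hR : (0:ℝ) ≤ ‖q‖ + r := add_nonneg (norm_nonneg q) hr0
    have hvn : ‖v‖ ≤ ‖q‖ + r := polar_aux_norm_le hvc
    have hper := polar_aux_perturb v (u p.1) w
    have h4 : ‖u p.1 - w‖ ≤ (p.2 : ℝ) := by
      have := Metric.mem_ball.1 hwb
      rw [dist_eq_norm] at this
      rw [norm_sub_rev]
      linarith
    have h5 : ‖v‖ * ‖u p.1 - w‖ ≤ (p.2 : ℝ) * (‖q‖ + r) := by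
      rw [mul_comm ((p.2 : ℝ)) (‖q‖ + r)]
      refine mul_le_mul hvn h4 (norm_nonneg _) hR
    linarith

/-- Hitting sets coming from a finite list of rational data are measurable. -/
lemma polar_aux_hit_meas {Ω : Type*} [MeasurableSpace Ω] {d : ℕ}
    {F : Ω → Set (EuclideanSpace ℝ (Fin d))} (hF : SetValuedMeasurable F)
    (u : ℕ → EuclideanSpace ℝ (Fin d)) (l : List (ℕ × ℚ)) :
    MeasurableSet {x | ∀ p ∈ l, (F x ∩ Metric.ball (u p.1) ((p.2 : ℝ))).Nonempty} := by
  induction l with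
  | nil => simp
  | cons a l ih =>
    have heq : {x | ∀ p ∈ a :: l, (F x ∩ Metric.ball (u p.1) ((p.2 : ℝ))).Nonempty}
        = {x | (F x ∩ Metric.ball (u a.1) ((a.2 : ℝ))).Nonempty}
          ∩ {x | ∀ p ∈ l, (F x ∩ Metric.ball (u p.1) ((p.2 : ℝ))).Nonempty} := by
      ext x
      simp [List.forall_mem_cons]
    rw [heq]
    exact (hF _ Metric.isOpen_ball).inter ih

/-- If `F` is a measurable map with values in nonempty convex symmetric closed subsets
of ℝ^d, then the polar map `F°` is measurable. -/
theorem polar_map_measurable {Ω : Type*} [MeasurableSpace Ω] (μ : Measure Ω)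
    [SigmaFinite μ] (hcompl : μ.IsComplete) (d : ℕ)
    (F : Ω → Set (EuclideanSpace ℝ (Fin d)))
    (hne : ∀ x, (F x).Nonempty) (hc : ∀ x, Convex ℝ (F x))
    (hs : ∀ x, ∀ v ∈ F x, -v ∈ F x) (hcl : ∀ x, IsClosed (F x))
    (hF : SetValuedMeasurable F) :
    SetValuedMeasurable (fun x => polarSet (F x)) := by
  classical
  set u : ℕ → EuclideanSpace ℝ (Fin d) := TopologicalSpace.denseSeq _ with hudef
  have hu : DenseRange u := TopologicalSpace.denseRange_denseSeq _
  -- measurability of "polar misses a closed ball"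
  have keyA : ∀ (q : EuclideanSpace ℝ (Fin d)) (r : ℝ),
      MeasurableSet {x | polarSet (F x) ∩ Metric.closedBall q r = ∅} := by
    intro q r
    have heq : {x | polarSet (F x) ∩ Metric.closedBall q r = ∅}
        = ⋃ (l : List (ℕ × ℚ))
            (_ : ∀ v ∈ Metric.closedBall q r, ∃ p ∈ l, 0 < p.2 ∧
              1 + (p.2 : ℝ) * (‖q‖ + r) < |⟪v, u p.1⟫|),
            {x | ∀ p ∈ l, (F x ∩ Metric.ball (u p.1) ((p.2 : ℝ))).Nonempty} := by
      ext x
      simp only [Set.mem_setOf_eq, Set.mem_iUnion, exists_prop]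
      rw [polar_core u hu (F x) q r]
    rw [heq]
    exact MeasurableSet.iUnion fun l => MeasurableSet.iUnion fun _ => polar_aux_hit_meas hF u l
  -- measurability of "polar hits an open ball"
  have keyB : ∀ (q : EuclideanSpace ℝ (Fin d)) (ρ : ℝ),
      MeasurableSet {x | (polarSet (F x) ∩ Metric.ball q ρ).Nonempty} := by
    intro q ρ
    have heq : {x | (polarSet (F x) ∩ Metric.ball q ρ).Nonempty}
        = (⋂ (ε : ℚ) (_ : 0 < ε ∧ (ε : ℝ) < ρ),
            {x | polarSet (F x) ∩ Metric.closedBall q (ε : ℝ) = ∅})ᶜ := by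
      ext x
      simp only [Set.mem_compl_iff, Set.mem_iInter, Set.mem_setOf_eq, not_forall]
      constructor
      · rintro ⟨v, hvp, hvb⟩
        have hdq : dist v q < ρ := Metric.mem_ball.1 hvb
        obtain ⟨ε, hε1, hε2⟩ := exists_rat_btwn hdq
        have hε0 : 0 < ε := by
          have : (0:ℝ) < (ε:ℝ) := lt_of_le_of_lt dist_nonneg hε1
          exact_mod_cast this
        exact ⟨ε, ⟨hε0, hε2⟩, Set.nonempty_iff_ne_empty.1
          ⟨v, hvp, Metric.mem_closedBall.2 hε1.le⟩⟩
      · rintro ⟨ε, ⟨hε0, hε2⟩, hne'⟩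
        obtain ⟨v, hvp, hvb⟩ := Set.nonempty_iff_ne_empty.2 hne'
        exact ⟨v, hvp, Metric.mem_ball.2 (lt_of_le_of_lt (Metric.mem_closedBall.1 hvb) hε2)⟩
    rw [heq]
    exact (MeasurableSet.iInter (fun (ε : ℚ) => MeasurableSet.iInter fun _ => keyA q (ε : ℝ))).compl
  intro U hU
  have heq : {x | ((fun x => polarSet (F x)) x ∩ U).Nonempty}
      = ⋃ (p : ℕ × ℚ) (_ : 0 < p.2 ∧ Metric.ball (u p.1) ((p.2 : ℝ)) ⊆ U),
          {x | (polarSet (F x) ∩ Metric.ball (u p.1) ((p.2 : ℝ))).Nonempty} := by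
    ext x
    simp only [Set.mem_setOf_eq, Set.mem_iUnion, exists_prop]
    constructor
    · rintro ⟨v, hvp, hvU⟩
      obtain ⟨ε, hε0, hball⟩ := Metric.isOpen_iff.1 hU v hvU
      obtain ⟨ρ, hρ1, hρ2⟩ := exists_rat_btwn (half_pos hε0)
      have hρ0 : (0:ℝ) < (ρ:ℝ) := hρ1
      obtain ⟨i, hi⟩ := hu.exists_dist_lt v hρ0
      refine ⟨(i, ρ), ⟨by exact_mod_cast hρ0, ?_⟩, v, hvp, ?_⟩
      · intro y hy
        apply hball
        have h1 : dist y (u i) < (ρ:ℝ) := Metric.mem_ball.1 hy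
        have h2 : dist y v ≤ dist y (u i) + dist (u i) v := dist_triangle _ _ _
        have h3 : dist (u i) v < (ρ:ℝ) := by rw [dist_comm]; exact hi
        have : dist y v < ε := by
          have : dist y v < 2 * (ρ:ℝ) := by linarith
          linarith
        exact Metric.mem_ball.2 this
      · exact Metric.mem_ball.2 hi
    · rintro ⟨p, ⟨hp0, hsub⟩, v, hvp, hvb⟩
      exact ⟨v, hvp, hsub hvb⟩
  rw [heq]
  exact MeasurableSet.iUnion fun p => MeasurableSet.iUnion fun _ => keyB _ _
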